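/- Let q ≡ 1 (mod 4) be a prime power with q ≥ 17, let L = PSL(2,q), X its involution class, t = diag(ι,-ι) with ι² = -1, and A = Aut(C(L,X)). Then the stabilizer A_t acts faithfully on the second disc Δ_2(t): any graph automorphism fixing t and fixing every vertex of Δ_2(t) pointwise is the identity. -/

import Mathlib

open Matrix
open scoped MatrixGroups

/-- The commuting involution graph of a group, on the set of all involutions. -/
def commGraph (G : Type*) [Group G] : SimpleGraph {x : G // x * x = 1 ∧ x ≠ 1} where
  Adj x y := x ≠ y ∧ (x : G) * y = (y : G) * x
  symm := ⟨fun x y h => ⟨h.1.symm, h.2.symm⟩⟩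
  loopless := ⟨fun x h => h.1 rfl⟩

/-- The automorphism group of a simple graph, as a subgroup of the permutations of vertices. -/
def graphAut {V : Type*} (G : SimpleGraph V) : Subgroup (Equiv.Perm V) where
  carrier := {e | ∀ x y, G.Adj (e x) (e y) ↔ G.Adj x y}
  one_mem' := by intro x y; simp
  mul_mem' := by
    intro a b ha hb x y
    simp only [Equiv.Perm.mul_apply]
    exact (ha _ _).trans (hb x y)
  inv_mem' := by
    intro a ha x y
    simpa using (ha (a⁻¹ x) (a⁻¹ y)).symm

namespace St13
variable {F : Type} [Field F]

theorem sq_cases {u v : F} (h : u*u = v*v) : u = v ∨ u = -v := by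
  have h' : (u - v) * (u + v) = 0 := by linear_combination h
  rcases mul_eq_zero.mp h' with h'' | h''
  · exact Or.inl (by linear_combination h'')
  · exact Or.inr (by linear_combination h'')

abbrev SL2 (F : Type) [Field F] := SpecialLinearGroup (Fin 2) F

def TM (x y z : F) : Matrix (Fin 2) (Fin 2) F := !![x, y; z, -x]

lemma TM_det {x y z : F} (h : x*x + y*z = -1) : (TM x y z).det = 1 := by
  simp [TM, Matrix.det_fin_two_of]; linear_combination -h

def TS (x y z : F) (h : x*x + y*z = -1) : SL2 F := ⟨TM x y z, TM_det h⟩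

lemma TM_eq_iff {x y z x' y' z' : F} : TM x y z = TM x' y' z' ↔ (x = x' ∧ y = y' ∧ z = z') := by
  constructor
  · intro h
    exact ⟨by have := congr_fun (congr_fun h 0) 0; simpa [TM] using this,
      by have := congr_fun (congr_fun h 0) 1; simpa [TM] using this,
      by have := congr_fun (congr_fun h 1) 0; simpa [TM] using this⟩
  · rintro ⟨rfl, rfl, rfl⟩; rfl

lemma TM_neg (x y z : F) : -TM x y z = TM (-x) (-y) (-z) := by
  ext i j; fin_cases i <;> fin_cases j <;> simp [TM]

lemma TM_trace_mul (a b c x y z : F) :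
    Matrix.trace (TM a b c * TM x y z) = 2*(a*x) + b*z + c*y := by
  simp [TM, Matrix.trace_fin_two, Matrix.mul_apply, Fin.sum_univ_two]; ring

lemma TM_anti (a b c x y z : F) :
    TM a b c * TM x y z + TM x y z * TM a b c
      = (2*(a*x) + b*z + c*y) • (1 : Matrix (Fin 2) (Fin 2) F) := by
  ext i j
  fin_cases i <;> fin_cases j <;>
    simp [TM, Matrix.mul_apply, Fin.sum_univ_two, Matrix.one_apply] <;> ring

lemma psl_eq_iff (S₁ S₂ : SL2 F) :
    (S₁ : PSL(2,F)) = (S₂ : PSL(2,F)) ↔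
      (S₁ : Matrix (Fin 2) (Fin 2) F) = S₂ ∨ (S₁ : Matrix (Fin 2) (Fin 2) F) = -(S₂ : Matrix (Fin 2) (Fin 2) F) := by
  rw [show ((S₁ : PSL(2,F)) = S₂) ↔ _ from QuotientGroup.eq, Matrix.SpecialLinearGroup.mem_center_iff]
  constructor
  · rintro ⟨r, hr, hs⟩
    have hr' : r = 1 ∨ r = -1 := by
      have : r * r = 1 := by rw [← pow_two]; simpa using hr
      exact mul_self_eq_one_iff.mp this
    have e1 : S₁ * (S₁⁻¹ * S₂) = S₂ := by group
    have e2 : (S₂ : Matrix (Fin 2) (Fin 2) F) = (S₁ : Matrix (Fin 2) (Fin 2) F) * ((S₁⁻¹ * S₂ : SL2 F) : Matrix (Fin 2) (Fin 2) F) := by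
      conv_lhs => rw [← e1]
      exact Matrix.SpecialLinearGroup.coe_mul _ _
    rw [← hs] at e2
    have e3 : (S₂ : Matrix (Fin 2) (Fin 2) F) = r • (S₁ : Matrix (Fin 2) (Fin 2) F) := by
      rw [e2]
      ext i j
      simp [Matrix.scalar_apply, Matrix.mul_apply, Matrix.diagonal_apply, Fin.sum_univ_two,
        mul_comm]
    rcases hr' with rfl | rfl
    · left; rw [e3]; simp
    · right; rw [e3]; simp
  · intro h
    rcases h with h | h
    · refine ⟨1, by norm_num, ?_⟩
      have : S₁ = S₂ := Subtype.ext h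
      subst this
      have : S₁⁻¹ * S₁ = 1 := by group
      rw [this]; simp [Matrix.scalar_apply]
    · refine ⟨-1, by norm_num, ?_⟩
      have h' : (S₂ : Matrix (Fin 2) (Fin 2) F) = -(S₁ : Matrix (Fin 2) (Fin 2) F) := by
        rw [h, neg_neg]
      have h1 : ((S₁⁻¹ : SL2 F) : Matrix (Fin 2) (Fin 2) F) * (S₁ : Matrix (Fin 2) (Fin 2) F) = 1 := by
        rw [← Matrix.SpecialLinearGroup.coe_mul]; simp
      have : ((S₁⁻¹ * S₂ : SL2 F) : Matrix (Fin 2) (Fin 2) F) = -1 := by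
        calc ((S₁⁻¹ * S₂ : SL2 F) : Matrix (Fin 2) (Fin 2) F)
            = ((S₁⁻¹ : SL2 F) : Matrix (Fin 2) (Fin 2) F) * (S₂ : Matrix (Fin 2) (Fin 2) F) :=
              Matrix.SpecialLinearGroup.coe_mul _ _
          _ = ((S₁⁻¹ : SL2 F) : Matrix (Fin 2) (Fin 2) F) * (-(S₁ : Matrix (Fin 2) (Fin 2) F)) := by rw [h']
          _ = -1 := by rw [mul_neg, h1]
      rw [this, _root_.map_neg, _root_.map_one]


lemma TM_sq {x y z : F} (h : x*x + y*z = -1) : TM x y z * TM x y z = -1 := by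
  ext i j
  fin_cases i <;> fin_cases j <;>
    simp [TM, Matrix.mul_apply, Fin.sum_univ_two, Matrix.one_apply] <;>
      first
      | linear_combination h
      | linear_combination -h
      | linear_combination 2*h
      | linear_combination -2*h
      | linear_combination (0 : F) * h

lemma coe_TS {x y z : F} (h : x*x + y*z = -1) :
    ((TS x y z h : SL2 F) : Matrix (Fin 2) (Fin 2) F) = TM x y z := rfl

lemma TS_invol (h2 : (2:F) ≠ 0) {x y z : F} (h : x*x + y*z = -1) :
    ((TS x y z h : PSL(2,F)) * (TS x y z h : PSL(2,F)) = 1 ∧ (TS x y z h : PSL(2,F)) ≠ 1) := by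
  constructor
  · rw [← QuotientGroup.mk_mul, ← QuotientGroup.mk_one, psl_eq_iff]
    right
    rw [Matrix.SpecialLinearGroup.coe_mul, coe_TS, TM_sq h, Matrix.SpecialLinearGroup.coe_one]
  · intro hh0
    rw [← QuotientGroup.mk_one] at hh0
    rw [psl_eq_iff, coe_TS, Matrix.SpecialLinearGroup.coe_one] at hh0
    rcases hh0 with hh | hh
    · have h0 : x = 1 := by simpa [TM] using congr_fun (congr_fun hh 0) 0
      have h1 : -x = 1 := by simpa [TM] using congr_fun (congr_fun hh 1) 1
      exact h2 (by linear_combination -h0 - h1)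
    · have h0 : x = -1 := by simpa [TM] using congr_fun (congr_fun hh 0) 0
      have h1 : -x = -1 := by simpa [TM] using congr_fun (congr_fun hh 1) 1
      exact h2 (by linear_combination h0 + h1)

def vtx (h2 : (2:F) ≠ 0) (x y z : F) (h : x*x+y*z = -1) : {w : PSL(2,F) // w * w = 1 ∧ w ≠ 1} :=
  ⟨(TS x y z h : PSL(2,F)), TS_invol h2 h⟩

lemma vtx_eq_iff (h2 : (2:F) ≠ 0) {x y z x' y' z' : F} (h : x*x+y*z = -1) (h' : x'*x'+y'*z' = -1) :
    vtx h2 x y z h = vtx h2 x' y' z' h' ↔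
      ((x = x' ∧ y = y' ∧ z = z') ∨ (x = -x' ∧ y = -y' ∧ z = -z')) := by
  rw [Subtype.ext_iff]
  show ((TS x y z h : PSL(2,F)) = (TS x' y' z' h' : PSL(2,F))) ↔ _
  rw [psl_eq_iff, coe_TS, coe_TS, TM_neg, TM_eq_iff, TM_eq_iff]


theorem no4 {F : Type} [Field F] (h2 : (2:F) ≠ 0)
    {a b c a' b' c' x y z x' y' z' : F}
    (hV : a*a + b*c = -1) (hV' : a'*a' + b'*c' = -1)
    (hW : x*x + y*z = -1) (hW' : x'*x' + y'*z' = -1)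
    (o1 : 2*(a*x) + b*z + c*y = 0)
    (o2 : 2*(a*x') + b*z' + c*y' = 0)
    (o3 : 2*(a'*x) + b'*z + c'*y = 0)
    (o4 : 2*(a'*x') + b'*z' + c'*y' = 0) :
    (x' = x ∧ y' = y ∧ z' = z) ∨ (x' = -x ∧ y' = -y ∧ z' = -z) ∨
    (a' = a ∧ b' = b ∧ c' = c) ∨ (a' = -a ∧ b' = -b ∧ c' = -c) := by
  by_cases hD : c*b' - b*c' = 0
  · by_cases hE : a*b' - a'*b = 0
    · by_cases hG : a*c' - a'*c = 0
      · -- proportional case : V' = ±V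
        by_cases ha : a = 0
        · subst ha
          have hb : b ≠ 0 := by intro hb; rw [hb] at hV; simp at hV
          have hc : c * b = -1 := by linear_combination hV
          have ha' : a' = 0 := by
            rcases mul_eq_zero.mp (show a' * b = 0 by linear_combination -hE) with h|h
            exacts [h, absurd h hb]
          subst ha'
          have hcb : c' * b = c * b' := by linear_combination -hD
          have hbb : b' * b' = b * b := by
            have h1 : b' * c' * (b*b) = -(b*b) := by linear_combination (b*b)*hV'
            have hh : b' * b' * (c*b) = -(b*b) := by linear_combination h1 - (b'*b)*hcb
            rw [hc] at hh
            linear_combination -hh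
          rcases sq_cases hbb with h | h
          · subst h
            exact Or.inr (Or.inr (Or.inl ⟨rfl, rfl, mul_right_cancel₀ hb hcb⟩))
          · subst h
            refine Or.inr (Or.inr (Or.inr ⟨neg_zero.symm, rfl, ?_⟩))
            apply mul_right_cancel₀ hb
            linear_combination hcb
        · have hb' : b' * a = a' * b := by linear_combination hE
          have hc' : c' * a = a' * c := by linear_combination hG
          have haa : a'*a' = a*a := by
            have h1 : (a'*a' + b'*c') * (a*a) = -(a*a) := by rw [hV']; ring
            have hh : a'*a'*(a*a) + (a'*b)*(a'*c) = -(a*a) := by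
              linear_combination h1 - (c'*a)*hb' - (a'*b)*hc'
            have h3 : a'*a'*(-1) = -(a*a) := by linear_combination hh - (a'*a')*hV
            linear_combination -h3
          rcases sq_cases haa with h | h
          · subst h
            refine Or.inr (Or.inr (Or.inl ⟨rfl, ?_, ?_⟩))
            · exact mul_right_cancel₀ ha (by linear_combination hb')
            · exact mul_right_cancel₀ ha (by linear_combination hc')
          · subst h
            refine Or.inr (Or.inr (Or.inr ⟨rfl, ?_, ?_⟩))
            · exact mul_right_cancel₀ ha (by linear_combination hb')
            · exact mul_right_cancel₀ ha (by linear_combination hc')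
      · -- G ≠ 0 : solve (x,y) in terms of z
        have ex : x*(2*(a*c' - a'*c)) = z*(b'*c - b*c') := by linear_combination c'*o1 - c*o3
        have ey : y*(2*(a*c' - a'*c)) = z*(2*(a'*b - a*b')) := by linear_combination (-2*a')*o1 + 2*a*o3
        have ex' : x'*(2*(a*c' - a'*c)) = z'*(b'*c - b*c') := by linear_combination c'*o2 - c*o4
        have ey' : y'*(2*(a*c' - a'*c)) = z'*(2*(a'*b - a*b')) := by linear_combination (-2*a')*o2 + 2*a*o4
        set G := a*c' - a'*c with hGd
        have hG2 : 2*G ≠ 0 := mul_ne_zero h2 hG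
        set K := (b'*c - b*c')^2 + (2*G)*(2*(a'*b - a*b')) with hKd
        have k1 : z*z*K = -((2*G)^2) := by
          linear_combination (2*G)^2 * hW - (x*(2*G) + z*(b'*c-b*c'))*ex - (z*(2*G))*ey
        have k2 : z'*z'*K = -((2*G)^2) := by
          linear_combination (2*G)^2 * hW' - (x'*(2*G) + z'*(b'*c-b*c'))*ex' - (z'*(2*G))*ey'
        have hKne : K ≠ 0 := by
          intro h
          rw [h, mul_zero] at k1
          exact hG2 (pow_eq_zero_iff (n := 2) (by norm_num) |>.mp (neg_eq_zero.mp k1.symm))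
        have hzz : z'*z' = z*z := mul_right_cancel₀ hKne (k2.trans k1.symm)
        rcases sq_cases hzz with h | h
        · subst h
          exact Or.inl ⟨mul_right_cancel₀ hG2 (ex'.trans ex.symm),
            mul_right_cancel₀ hG2 (ey'.trans ey.symm), rfl⟩
        · refine Or.inr (Or.inl ⟨?_, ?_, h⟩)
          · apply mul_right_cancel₀ hG2
            rw [ex', h]; linear_combination ex
          · apply mul_right_cancel₀ hG2
            rw [ey', h]; linear_combination ey
    · -- E ≠ 0 : solve (x,z) in terms of y
      have ex : x*(2*(a*b' - a'*b)) = y*(b*c' - b'*c) := by linear_combination b'*o1 - b*o3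
      have ez : z*(2*(a*b' - a'*b)) = y*(2*(a'*c - a*c')) := by linear_combination (-2*a')*o1 + 2*a*o3
      have ex' : x'*(2*(a*b' - a'*b)) = y'*(b*c' - b'*c) := by linear_combination b'*o2 - b*o4
      have ez' : z'*(2*(a*b' - a'*b)) = y'*(2*(a'*c - a*c')) := by linear_combination (-2*a')*o2 + 2*a*o4
      set E := a*b' - a'*b with hEd
      have hE2 : 2*E ≠ 0 := mul_ne_zero h2 hE
      set K := (b*c' - b'*c)^2 + (2*E)*(2*(a'*c - a*c')) with hKd
      have k1 : y*y*K = -((2*E)^2) := by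
        linear_combination (2*E)^2 * hW - (x*(2*E) + y*(b*c'-b'*c))*ex - (y*(2*E))*ez
      have k2 : y'*y'*K = -((2*E)^2) := by
        linear_combination (2*E)^2 * hW' - (x'*(2*E) + y'*(b*c'-b'*c))*ex' - (y'*(2*E))*ez'
      have hKne : K ≠ 0 := by
        intro h
        rw [h, mul_zero] at k1
        exact hE2 (pow_eq_zero_iff (n := 2) (by norm_num) |>.mp (neg_eq_zero.mp k1.symm))
      have hyy : y'*y' = y*y := mul_right_cancel₀ hKne (k2.trans k1.symm)
      rcases sq_cases hyy with h | h
      · subst h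
        exact Or.inl ⟨mul_right_cancel₀ hE2 (ex'.trans ex.symm), rfl,
          mul_right_cancel₀ hE2 (ez'.trans ez.symm)⟩
      · refine Or.inr (Or.inl ⟨?_, h, ?_⟩)
        · apply mul_right_cancel₀ hE2
          rw [ex', h]; linear_combination ex
        · apply mul_right_cancel₀ hE2
          rw [ez', h]; linear_combination ez
  · -- D ≠ 0 : solve (y,z) in terms of x
    have ey : y*(c*b' - b*c') = x*(2*(a'*b - a*b')) := by linear_combination b'*o1 - b*o3
    have ez : z*(c*b' - b*c') = x*(2*(a*c' - a'*c)) := by linear_combination (-c')*o1 + c*o3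
    have ey' : y'*(c*b' - b*c') = x'*(2*(a'*b - a*b')) := by linear_combination b'*o2 - b*o4
    have ez' : z'*(c*b' - b*c') = x'*(2*(a*c' - a'*c)) := by linear_combination (-c')*o2 + c*o4
    set D := c*b' - b*c' with hDd
    set K := D^2 + (2*(a'*b - a*b'))*(2*(a*c' - a'*c)) with hKd
    have k1 : x*x*K = -(D^2) := by
      linear_combination D^2 * hW - (z*D)*ey - (x*(2*(a'*b - a*b')))*ez
    have k2 : x'*x'*K = -(D^2) := by
      linear_combination D^2 * hW' - (z'*D)*ey' - (x'*(2*(a'*b - a*b')))*ez'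
    have hKne : K ≠ 0 := by
      intro h
      rw [h, mul_zero] at k1
      exact hD (pow_eq_zero_iff (n := 2) (by norm_num) |>.mp (neg_eq_zero.mp k1.symm))
    have hxx : x'*x' = x*x := mul_right_cancel₀ hKne (k2.trans k1.symm)
    rcases sq_cases hxx with h | h
    · subst h
      exact Or.inl ⟨rfl, mul_right_cancel₀ hD (ey'.trans ey.symm),
        mul_right_cancel₀ hD (ez'.trans ez.symm)⟩
    · refine Or.inr (Or.inl ⟨h, ?_, ?_⟩)
      · apply mul_right_cancel₀ hD
        rw [ey', h]; linear_combination ey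
      · apply mul_right_cancel₀ hD
        rw [ez', h]; linear_combination ez

lemma prop_of_comm (h2 : (2:F) ≠ 0) {a b c x y z : F} (hA : a*a+b*c = -1) (hB : x*x+y*z = -1)
    (e1 : b*z = c*y) (e2 : a*y = b*x) (e3 : c*x = a*z) :
    (x = a ∧ y = b ∧ z = c) ∨ (x = -a ∧ y = -b ∧ z = -c) := by
  by_cases ha : a = 0
  · subst ha
    have hb : b ≠ 0 := by intro hb; rw [hb] at hA; simp at hA
    have hx : x = 0 := by
      rcases mul_eq_zero.mp (show b * x = 0 by linear_combination -e2) with h|h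
      exacts [absurd h hb, h]
    subst hx
    have hyy : y*y = b*b := by linear_combination (y*b)*e1 - (b*b)*hB + (y*y)*hA
    rcases sq_cases hyy with h | h
    · subst h
      refine Or.inl ⟨rfl, rfl, mul_left_cancel₀ hb (by linear_combination e1)⟩
    · subst h
      exact Or.inr ⟨neg_zero.symm, rfl, mul_left_cancel₀ hb (by linear_combination e1)⟩
  · have hxx : x*x = a*a := by
      linear_combination (x*x)*hA - (a*a)*hB + (a*z)*e2 - (b*x)*e3
    rcases sq_cases hxx with h | h
    · subst h
      exact Or.inl ⟨rfl, mul_left_cancel₀ ha (by linear_combination e2),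
        mul_left_cancel₀ ha (by linear_combination -e3)⟩
    · subst h
      exact Or.inr ⟨rfl, mul_left_cancel₀ ha (by linear_combination e2),
        mul_left_cancel₀ ha (by linear_combination -e3)⟩


lemma adj_vtx (h2 : (2:F) ≠ 0) {a b c x y z : F} (h : a*a+b*c = -1) (h' : x*x+y*z = -1) :
    (commGraph (PSL(2,F))).Adj (vtx h2 a b c h) (vtx h2 x y z h') ↔
      2*(a*x) + b*z + c*y = 0 := by
  constructor
  · rintro ⟨hne, hcomm⟩
    have hcomm' : ((TS a b c h * TS x y z h' : SL2 F) : PSL(2,F))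
        = ((TS x y z h' * TS a b c h : SL2 F) : PSL(2,F)) := by
      rw [QuotientGroup.mk_mul, QuotientGroup.mk_mul]; exact hcomm
    rw [psl_eq_iff, Matrix.SpecialLinearGroup.coe_mul, Matrix.SpecialLinearGroup.coe_mul, coe_TS, coe_TS]
      at hcomm'
    rcases hcomm' with hc | hc
    · exfalso
      have c00 := congr_fun (congr_fun hc 0) 0
      have c01 := congr_fun (congr_fun hc 0) 1
      have c10 := congr_fun (congr_fun hc 1) 0
      simp [TM, Matrix.mul_apply, Fin.sum_univ_two] at c00 c01 c10
      have e1 : b*z = c*y := by linear_combination c00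
      have e2 : a*y = b*x := mul_left_cancel₀ h2 (by linear_combination c01)
      have e3 : c*x = a*z := mul_left_cancel₀ h2 (by linear_combination c10)
      rcases prop_of_comm h2 h h' e1 e2 e3 with ⟨h1,hh2,h3⟩ | ⟨h1,hh2,h3⟩
      · exact hne ((vtx_eq_iff h2 h h').mpr (Or.inl ⟨h1.symm, hh2.symm, h3.symm⟩))
      · exact hne ((vtx_eq_iff h2 h h').mpr (Or.inr ⟨by linear_combination h1,
          by linear_combination hh2, by linear_combination h3⟩))
    · have hanti := TM_anti a b c x y z
      rw [hc] at hanti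
      have h0 : (0 : Matrix (Fin 2) (Fin 2) F) = (2*(a*x) + b*z + c*y) • 1 := by
        rw [← hanti]; abel
      have := congr_fun (congr_fun h0 0) 0
      simpa using this.symm
  · intro htr
    constructor
    · intro hv
      rw [vtx_eq_iff h2 h h'] at hv
      rcases hv with ⟨rfl,rfl,rfl⟩ | ⟨rfl,rfl,rfl⟩
      · exact h2 (by linear_combination 2*h - htr)
      · exact h2 (by linear_combination 2*h' + htr)
    · show ((TS a b c h : PSL(2,F)) * (TS x y z h' : PSL(2,F))
          = (TS x y z h' : PSL(2,F)) * (TS a b c h : PSL(2,F)))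
      rw [← QuotientGroup.mk_mul, ← QuotientGroup.mk_mul, psl_eq_iff,
        Matrix.SpecialLinearGroup.coe_mul, Matrix.SpecialLinearGroup.coe_mul, coe_TS, coe_TS]
      right
      have hanti := TM_anti a b c x y z
      rw [htr, zero_smul] at hanti
      exact eq_neg_of_add_eq_zero_left hanti

lemma exists_triple (h2 : (2:F) ≠ 0) (v : {w : PSL(2,F) // w * w = 1 ∧ w ≠ 1}) :
    ∃ x y z hh, v = vtx h2 x y z hh := by
  obtain ⟨S, hS⟩ := QuotientGroup.mk_surjective (v.1)
  have hsq := v.2.1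
  rw [← hS, ← QuotientGroup.mk_mul, ← QuotientGroup.mk_one,
    psl_eq_iff, Matrix.SpecialLinearGroup.coe_mul, Matrix.SpecialLinearGroup.coe_one] at hsq
  have hdet : (S : Matrix (Fin 2) (Fin 2) F) 0 0 * (S : Matrix (Fin 2) (Fin 2) F) 1 1
      - (S : Matrix (Fin 2) (Fin 2) F) 0 1 * (S : Matrix (Fin 2) (Fin 2) F) 1 0 = 1 := by
    rw [← Matrix.det_fin_two]; exact S.2
  set M := (S : Matrix (Fin 2) (Fin 2) F) with hM
  rcases hsq with hc | hc
  · exfalso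
    have e00 := congr_fun (congr_fun hc 0) 0
    have e01 := congr_fun (congr_fun hc 0) 1
    have e11 := congr_fun (congr_fun hc 1) 1
    simp [Matrix.mul_apply, Fin.sum_univ_two, Matrix.one_apply] at e00 e01 e11
    by_cases hps : M 0 0 + M 1 1 = 0
    · exact h2 (by linear_combination -e00 - hdet + (M 0 0)*hps)
    · have hq : M 0 1 = 0 := by
        rcases mul_eq_zero.mp (show M 0 1 * (M 0 0 + M 1 1) = 0 by linear_combination e01)
          with hh|hh
        exacts [hh, absurd hh hps]
      have hsp : M 1 1 = M 0 0 := by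
        have hfac : (M 1 1 - M 0 0) * (M 1 1 + M 0 0) = 0 := by linear_combination e11 - e00
        rcases mul_eq_zero.mp hfac with hh|hh
        · linear_combination hh
        · exact absurd (by linear_combination hh) hps
      have e10 := congr_fun (congr_fun hc 1) 0
      simp [Matrix.mul_apply, Fin.sum_univ_two, Matrix.one_apply] at e10
      have hr : M 1 0 = 0 := by
        rcases mul_eq_zero.mp (show M 1 0 * (M 0 0 + M 1 1) = 0 by linear_combination e10)
          with hh|hh
        exacts [hh, absurd hh hps]
      have hpp : M 0 0 * M 0 0 = 1 := by
        rw [hq, hsp] at hdet; linear_combination hdet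
      apply v.2.2
      rw [← hS, ← QuotientGroup.mk_one, psl_eq_iff, Matrix.SpecialLinearGroup.coe_one, ← hM]
      rcases mul_self_eq_one_iff.mp hpp with hh | hh
      · left
        rw [Matrix.eta_fin_two M, hq, hr, hsp, hh, Matrix.one_fin_two]
      · right
        rw [Matrix.eta_fin_two M, hq, hr, hsp, hh]
        ext i j; fin_cases i <;> fin_cases j <;> simp
  · have e00 := congr_fun (congr_fun hc 0) 0
    have e01 := congr_fun (congr_fun hc 0) 1
    have e11 := congr_fun (congr_fun hc 1) 1
    simp [Matrix.mul_apply, Fin.sum_univ_two, Matrix.one_apply] at e00 e01 e11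
    by_cases hps : M 0 0 + M 1 1 = 0
    · have h3 : M 0 0 * M 0 0 + M 0 1 * M 1 0 = -1 := by linear_combination e00
      refine ⟨M 0 0, M 0 1, M 1 0, h3, ?_⟩
      apply Subtype.ext
      show v.1 = _
      rw [← hS]
      show ((S : SL2 F) : PSL(2,F)) = ((TS _ _ _ h3 : SL2 F) : PSL(2,F))
      rw [psl_eq_iff, coe_TS, ← hM]
      left
      have h11 : M 1 1 = -(M 0 0) := by linear_combination hps
      rw [Matrix.eta_fin_two M, h11]
      rfl
    · exfalso
      have hq : M 0 1 = 0 := by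
        rcases mul_eq_zero.mp (show M 0 1 * (M 0 0 + M 1 1) = 0 by linear_combination e01)
          with hh|hh
        exacts [hh, absurd hh hps]
      have hp2 : M 0 0 * M 0 0 = -1 := by rw [hq] at e00; linear_combination e00
      have hps1 : M 0 0 * M 1 1 = 1 := by rw [hq] at hdet; linear_combination hdet
      have hfac : M 0 0 * (M 0 0 + M 1 1) = 0 := by linear_combination hp2 + hps1
      rcases mul_eq_zero.mp hfac with hh|hh
      · rw [hh] at hp2
        exact one_ne_zero (α := F) (by linear_combination hp2)
      · exact hps hh


lemma dist_two (h2 : (2:F) ≠ 0) {i x y z β : F} (hi : i*i + 0*0 = -1) (hi0 : i ≠ 0)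
    (h' : x*x + y*z = -1)
    (hx : x ≠ 0) (hz : z ≠ 0) (hβ : β ≠ 0) (hy : y = β*β*z) :
    (commGraph (PSL(2,F))).dist (vtx h2 i 0 0 hi) (vtx h2 x y z h') = 2 := by
  have hβdet : (0:F)*0 + β*(-β⁻¹) = -1 := by field_simp; ring
  have adj1 : (commGraph (PSL(2,F))).Adj (vtx h2 i 0 0 hi) (vtx h2 0 β (-β⁻¹) hβdet) := by
    rw [adj_vtx]; ring
  have adj2 : (commGraph (PSL(2,F))).Adj (vtx h2 0 β (-β⁻¹) hβdet) (vtx h2 x y z h') := by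
    rw [adj_vtx, hy]; field_simp; ring
  have hne : vtx h2 i 0 0 hi ≠ vtx h2 x y z h' := by
    rw [Ne, vtx_eq_iff]
    rintro (⟨-,-,hz0⟩ | ⟨-,-,hz0⟩)
    · exact hz hz0.symm
    · exact hz (by linear_combination hz0)
  have hnadj : ¬ (commGraph (PSL(2,F))).Adj (vtx h2 i 0 0 hi) (vtx h2 x y z h') := by
    rw [adj_vtx]
    intro hh
    have hix : i * x = 0 := mul_left_cancel₀ h2 (by linear_combination hh)
    rcases mul_eq_zero.mp hix with hh'|hh'
    exacts [hi0 hh', hx hh']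
  have hle : (commGraph (PSL(2,F))).dist (vtx h2 i 0 0 hi) (vtx h2 x y z h') ≤ 2 :=
    SimpleGraph.dist_le (SimpleGraph.Walk.cons adj1 (SimpleGraph.Walk.cons adj2 SimpleGraph.Walk.nil))
  have hne0 : (commGraph (PSL(2,F))).dist (vtx h2 i 0 0 hi) (vtx h2 x y z h') ≠ 0 := by
    intro h0
    rcases SimpleGraph.dist_eq_zero_iff_eq_or_not_reachable.mp h0 with hh|hh
    · exact hne hh
    · exact hh ⟨SimpleGraph.Walk.cons adj1 (SimpleGraph.Walk.cons adj2 SimpleGraph.Walk.nil)⟩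
  have hne1 : (commGraph (PSL(2,F))).dist (vtx h2 i 0 0 hi) (vtx h2 x y z h') ≠ 1 := by
    intro h1
    exact hnadj (SimpleGraph.dist_eq_one_iff_adj.mp h1)
  omega

lemma fix2 (h2 : (2:F) ≠ 0) (a : Equiv.Perm {x : PSL(2,F) // x * x = 1 ∧ x ≠ 1})
    (ha : a ∈ graphAut (commGraph (PSL(2,F))))
    {v w₁ w₂ : {x : PSL(2,F) // x * x = 1 ∧ x ≠ 1}} (hw : w₁ ≠ w₂)
    (had1 : (commGraph (PSL(2,F))).Adj v w₁) (had2 : (commGraph (PSL(2,F))).Adj v w₂)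
    (f1 : a w₁ = w₁) (f2 : a w₂ = w₂) : a v = v := by
  by_contra hav
  have ha' : ∀ x y, (commGraph (PSL(2,F))).Adj (a x) (a y) ↔ (commGraph (PSL(2,F))).Adj x y := ha
  have had3 : (commGraph (PSL(2,F))).Adj (a v) w₁ := by
    have := (ha' v w₁).mpr had1; rwa [f1] at this
  have had4 : (commGraph (PSL(2,F))).Adj (a v) w₂ := by
    have := (ha' v w₂).mpr had2; rwa [f2] at this
  obtain ⟨p, q, r, hp, hvp⟩ := exists_triple h2 v
  obtain ⟨p', q', r', hp', hvp'⟩ := exists_triple h2 (a v)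
  obtain ⟨s1, s2, s3, hs, hw1⟩ := exists_triple h2 w₁
  obtain ⟨u1, u2, u3, hu, hw2⟩ := exists_triple h2 w₂
  rw [hvp, hw1] at had1
  rw [hvp, hw2] at had2
  rw [hvp', hw1] at had3
  rw [hvp', hw2] at had4
  rw [adj_vtx] at had1 had2 had3 had4
  rcases no4 h2 hp hp' hs hu had1 had2 had3 had4 with ⟨e1,e2,e3⟩ | ⟨e1,e2,e3⟩ | ⟨e1,e2,e3⟩ | ⟨e1,e2,e3⟩
  · exact hw (by rw [hw1, hw2, vtx_eq_iff]; exact Or.inl ⟨e1.symm, e2.symm, e3.symm⟩)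
  · refine hw ?_
    rw [hw1, hw2, vtx_eq_iff]
    exact Or.inr ⟨by linear_combination e1, by linear_combination e2, by linear_combination e3⟩
  · have heq : vtx h2 p' q' r' hp' = vtx h2 p q r hp :=
      (vtx_eq_iff h2 hp' hp).mpr (Or.inl ⟨e1,e2,e3⟩)
    exact hav (by rw [hvp', heq, ← hvp])
  · have heq : vtx h2 p' q' r' hp' = vtx h2 p q r hp :=
      (vtx_eq_iff h2 hp' hp).mpr (Or.inr ⟨e1,e2,e3⟩)
    exact hav (by rw [hvp', heq, ← hvp])

lemma exists_avoid [Fintype F] (s : Finset F) (hcard : s.card < Fintype.card F) : ∃ m : F, m ∉ s := by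
  by_contra h
  push_neg at h
  have hsub : (Finset.univ : Finset F) ⊆ s := fun m _ => h m
  have := Finset.card_le_card hsub
  rw [Finset.card_univ] at this
  omega


lemma card5 [DecidableEq F] (a b c d e : F) : ({a,b,c,d,e} : Finset F).card ≤ 5 := by
  have h1 := Finset.card_insert_le a ({b,c,d,e} : Finset F)
  have h2 := Finset.card_insert_le b ({c,d,e} : Finset F)
  have h3 := Finset.card_insert_le c ({d,e} : Finset F)
  have h4 := Finset.card_insert_le d ({e} : Finset F)
  have h5 : ({e} : Finset F).card = 1 := Finset.card_singleton e
  omega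

lemma card9 [DecidableEq F] (a b c d e f g h i : F) : ({a,b,c,d,e,f,g,h,i} : Finset F).card ≤ 9 := by
  have h1 := Finset.card_insert_le a ({b,c,d,e,f,g,h,i} : Finset F)
  have h2 := Finset.card_insert_le b ({c,d,e,f,g,h,i} : Finset F)
  have h3 := Finset.card_insert_le c ({d,e,f,g,h,i} : Finset F)
  have h4 := Finset.card_insert_le d ({e,f,g,h,i} : Finset F)
  have h5 := card5 e f g h i
  omega

lemma good_m [Fintype F] (h2 : (2:F) ≠ 0) {i m : F} (hi : i*i = -1)
    (hm0 : m ≠ 0) (hm1 : m ≠ 1) (hm1' : m ≠ -1) (hmi : m ≠ i) (hmi' : m ≠ -i) :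
    (m - m⁻¹)/2 ≠ 0 ∧ (m + m⁻¹)/2 ≠ 0 ∧
      1 + ((m - m⁻¹)/2)*((m - m⁻¹)/2) = ((m + m⁻¹)/2)*((m + m⁻¹)/2) := by
  refine ⟨?_, ?_, ?_⟩
  · intro hx
    have hmm : m*m = 1 := by
      field_simp at hx
      linear_combination hx
    rcases sq_cases (show m*m = 1*1 by linear_combination hmm) with h|h
    · exact hm1 h
    · exact hm1' h
  · intro hk
    have hmm : m*m = i*i := by
      field_simp at hk
      linear_combination hk - hi
    rcases sq_cases hmm with h|h
    · exact hmi h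
    · exact hmi' h
  · field_simp
    ring

lemma two_x [Fintype F] (hcard : 17 ≤ Fintype.card F) (h2 : (2:F) ≠ 0) {i : F}
    (hi : i*i = -1) :
    ∃ x₁ k₁ x₂ k₂ : F, x₁ ≠ 0 ∧ x₂ ≠ 0 ∧ k₁ ≠ 0 ∧ k₂ ≠ 0 ∧
      1 + x₁*x₁ = k₁*k₁ ∧ 1 + x₂*x₂ = k₂*k₂ ∧ x₁ ≠ x₂ ∧ x₁ ≠ -x₂ := by
  classical
  obtain ⟨m₁, hm₁⟩ := exists_avoid ({0,1,-1,i,-i} : Finset F)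
    (lt_of_le_of_lt (card5 0 1 (-1) i (-i)) (by omega))
  simp only [Finset.mem_insert, Finset.mem_singleton, not_or] at hm₁
  obtain ⟨hm10, hm11, hm11', hm1i, hm1i'⟩ := hm₁
  obtain ⟨m₂, hm₂⟩ := exists_avoid ({0,1,-1,i,-i,m₁,-m₁,m₁⁻¹,-m₁⁻¹} : Finset F)
    (lt_of_le_of_lt (card9 0 1 (-1) i (-i) m₁ (-m₁) m₁⁻¹ (-m₁⁻¹)) (by omega))
  simp only [Finset.mem_insert, Finset.mem_singleton, not_or] at hm₂
  obtain ⟨hm20, hm21, hm21', hm2i, hm2i', hd1, hd2, hd3, hd4⟩ := hm₂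
  obtain ⟨hx1, hk1, hs1⟩ := good_m h2 hi hm10 hm11 hm11' hm1i hm1i'
  obtain ⟨hx2, hk2, hs2⟩ := good_m h2 hi hm20 hm21 hm21' hm2i hm2i'
  refine ⟨(m₁ - m₁⁻¹)/2, (m₁ + m₁⁻¹)/2, (m₂ - m₂⁻¹)/2, (m₂ + m₂⁻¹)/2,
    hx1, hx2, hk1, hk2, hs1, hs2, ?_, ?_⟩
  · intro heq
    have key : ((m₁ - m₂) * (m₁*m₂ + 1)) * 2 = 0 := by
      field_simp at heq
      linear_combination 2*heq
    rcases mul_eq_zero.mp key with key'|key'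
    · rcases mul_eq_zero.mp key' with h|h
      · exact hd1 (by linear_combination -h)
      · refine hd4 ?_
        field_simp
        linear_combination h
    · exact h2 key'
  · intro heq
    have key : ((m₁ + m₂) * (m₁*m₂ - 1)) * 2 = 0 := by
      field_simp at heq
      linear_combination 2*heq
    rcases mul_eq_zero.mp key with key'|key'
    · rcases mul_eq_zero.mp key' with h|h
      · exact hd2 (by linear_combination h)
      · refine hd3 ?_
        field_simp
        linear_combination h
    · exact h2 key'


lemma fix_u [Fintype F] (hcard : 17 ≤ Fintype.card F) (h2 : (2:F) ≠ 0)
    {i : F} (hi2 : i*i = -1) (hi0 : i ≠ 0) (hti : i*i + 0*0 = -1)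
    (a : Equiv.Perm {x : PSL(2,F) // x * x = 1 ∧ x ≠ 1})
    (ha : a ∈ graphAut (commGraph (PSL(2,F))))
    (hfixT : ∀ w, (commGraph (PSL(2,F))).dist (vtx h2 i 0 0 hti) w = 2 → a w = w)
    {α : F} (hα : α ≠ 0) (hU : i*i + α*0 = -1) :
    a (vtx h2 i α 0 hU) = vtx h2 i α 0 hU := by
  obtain ⟨x₁,k₁,x₂,k₂,hx1,hx2,hk1,hk2,hs1,hs2,hne,hne'⟩ := two_x hcard h2 hi2
  have build : ∀ (x k : F), x ≠ 0 → k ≠ 0 → 1 + x*x = k*k →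
      ∃ (y z : F) (hd : x*x + y*z = -1),
        (commGraph (PSL(2,F))).dist (vtx h2 i 0 0 hti) (vtx h2 x y z hd) = 2 ∧
        (commGraph (PSL(2,F))).Adj (vtx h2 i α 0 hU) (vtx h2 x y z hd) := by
    intro x k hx hk hs
    set z := -(2*i*x)/α with hzdef
    have hz : z ≠ 0 := by
      apply div_ne_zero _ hα
      simp only [neg_ne_zero]
      exact mul_ne_zero (mul_ne_zero h2 hi0) hx
    set y := (-1 - x*x)/z with hydef
    have hzz : z * α = -(2*i*x) := div_mul_cancel₀ _ hα
    have hyz : y * z = -1 - x*x := div_mul_cancel₀ _ hz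
    have hd : x*x + y*z = -1 := by linear_combination hyz
    refine ⟨y, z, hd, ?_, ?_⟩
    · apply dist_two h2 hti hi0 hd hx hz
        (show i*k/z ≠ 0 from div_ne_zero (mul_ne_zero hi0 hk) hz)
      have e : i*k/z*z = i*k := div_mul_cancel₀ _ hz
      apply mul_right_cancel₀ hz
      calc y*z = -1 - x*x := hyz
        _ = -(k*k) := by linear_combination -hs
        _ = (i*k)*(i*k) := by linear_combination -(k*k)*hi2
        _ = (i*k/z*z)*(i*k/z*z) := by rw [e]
        _ = ((i*k/z)*(i*k/z)*z)*z := by ring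
    · rw [adj_vtx]
      linear_combination hzz
  obtain ⟨y₁, z₁, hd1, hdist1, hadj1⟩ := build x₁ k₁ hx1 hk1 hs1
  obtain ⟨y₂, z₂, hd2, hdist2, hadj2⟩ := build x₂ k₂ hx2 hk2 hs2
  have hwne : vtx h2 x₁ y₁ z₁ hd1 ≠ vtx h2 x₂ y₂ z₂ hd2 := by
    rw [Ne, vtx_eq_iff]
    rintro (⟨e,-,-⟩|⟨e,-,-⟩)
    exacts [hne e, hne' e]
  exact fix2 h2 a ha hwne hadj1 hadj2 (hfixT _ hdist1) (hfixT _ hdist2)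

lemma fix_w [Fintype F] (hcard : 17 ≤ Fintype.card F) (h2 : (2:F) ≠ 0)
    {i : F} (hi2 : i*i = -1) (hi0 : i ≠ 0) (hti : i*i + 0*0 = -1)
    (a : Equiv.Perm {x : PSL(2,F) // x * x = 1 ∧ x ≠ 1})
    (ha : a ∈ graphAut (commGraph (PSL(2,F))))
    (hfixT : ∀ w, (commGraph (PSL(2,F))).dist (vtx h2 i 0 0 hti) w = 2 → a w = w)
    {γ : F} (hγ : γ ≠ 0) (hW : i*i + 0*γ = -1) :
    a (vtx h2 i 0 γ hW) = vtx h2 i 0 γ hW := by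
  obtain ⟨x₁,k₁,x₂,k₂,hx1,hx2,hk1,hk2,hs1,hs2,hne,hne'⟩ := two_x hcard h2 hi2
  have build : ∀ (x k : F), x ≠ 0 → k ≠ 0 → 1 + x*x = k*k →
      ∃ (y z : F) (hd : x*x + y*z = -1),
        (commGraph (PSL(2,F))).dist (vtx h2 i 0 0 hti) (vtx h2 x y z hd) = 2 ∧
        (commGraph (PSL(2,F))).Adj (vtx h2 i 0 γ hW) (vtx h2 x y z hd) := by
    intro x k hx hk hs
    set y := -(2*i*x)/γ with hydef
    have hy : y ≠ 0 := by
      apply div_ne_zero _ hγ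
      simp only [neg_ne_zero]
      exact mul_ne_zero (mul_ne_zero h2 hi0) hx
    set z := (-1 - x*x)/y with hzdef
    have hyy : y * γ = -(2*i*x) := div_mul_cancel₀ _ hγ
    have hzy : z * y = -1 - x*x := div_mul_cancel₀ _ hy
    have hd : x*x + y*z = -1 := by linear_combination hzy
    have hz : z ≠ 0 := by
      intro hh
      rw [hh, zero_mul] at hzy
      have : k*k = 0 := by linear_combination hzy - hs
      rcases mul_eq_zero.mp this with h|h
      exacts [hk h, hk h]
    refine ⟨y, z, hd, ?_, ?_⟩
    · apply dist_two h2 hti hi0 hd hx hz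
        (show i*y/k ≠ 0 from div_ne_zero (mul_ne_zero hi0 hy) hk)
      have e : i*y/k*k = i*y := div_mul_cancel₀ _ hk
      apply mul_right_cancel₀ (mul_ne_zero hk hk)
      calc y*(k*k) = -(y*y*z) := by linear_combination y*hzy - y*hs
        _ = (i*y)*(i*y)*z := by linear_combination -(y*y*z)*hi2
        _ = ((i*y/k*k)*(i*y/k*k))*z := by rw [e]
        _ = ((i*y/k)*(i*y/k)*z)*(k*k) := by ring
    · rw [adj_vtx]
      linear_combination hyy
  obtain ⟨y₁, z₁, hd1, hdist1, hadj1⟩ := build x₁ k₁ hx1 hk1 hs1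
  obtain ⟨y₂, z₂, hd2, hdist2, hadj2⟩ := build x₂ k₂ hx2 hk2 hs2
  have hwne : vtx h2 x₁ y₁ z₁ hd1 ≠ vtx h2 x₂ y₂ z₂ hd2 := by
    rw [Ne, vtx_eq_iff]
    rintro (⟨e,-,-⟩|⟨e,-,-⟩)
    exacts [hne e, hne' e]
  exact fix2 h2 a ha hwne hadj1 hadj2 (hfixT _ hdist1) (hfixT _ hdist2)

end St13


open St13 in
/-- For `q ≡ 1 (mod 4)`, `q ≥ 17`, `t = diag(ι,-ι)` with `ι² = -1`, the stabilizer of `t` in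
`Aut(C(L,X))` acts faithfully on the second disc `Δ₂(t)`: an automorphism fixing `t` and
fixing every vertex at distance `2` from `t` is the identity. -/
theorem stmt_13 (q : ℕ) (hq1 : q % 4 = 1) (hq17 : 17 ≤ q)
    (F : Type) [Field F] [Fintype F] (hF : Fintype.card F = q)
    (ι : F) (hι : ι ^ 2 = -1)
    (t : SpecialLinearGroup (Fin 2) F)
    (htm : (t : Matrix (Fin 2) (Fin 2) F) = !![ι, 0; 0, -ι])
    (ht : ((t : PSL(2, F)) * (t : PSL(2, F)) = 1 ∧ (t : PSL(2, F)) ≠ 1))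
    (a : Equiv.Perm {x : PSL(2, F) // x * x = 1 ∧ x ≠ 1})
    (ha : a ∈ graphAut (commGraph (PSL(2, F))))
    (hat : a ⟨(t : PSL(2, F)), ht⟩ = ⟨(t : PSL(2, F)), ht⟩)
    (hfix : ∀ v, (commGraph (PSL(2, F))).dist ⟨(t : PSL(2, F)), ht⟩ v = 2 → a v = v) :
    a = 1 := by
  classical
  have hchar : ringChar F ≠ 2 := by
    intro hc
    have hmod := FiniteField.even_card_iff_char_two.mp hc
    rw [hF] at hmod
    omega
  have h2 : (2:F) ≠ 0 := by
    intro hh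
    have hdvd : ringChar F ∣ 2 := (CharP.cast_eq_zero_iff F (ringChar F) 2).mp hh
    rcases (Nat.dvd_prime Nat.prime_two).mp hdvd with h|h
    · exact CharP.ringChar_ne_one h
    · exact hchar h
  have hi2 : ι*ι = -1 := by rw [← pow_two]; exact hι
  have hi0 : ι ≠ 0 := by
    intro hh
    rw [hh] at hi2
    simp at hi2
  have hti : ι*ι + 0*0 = -1 := by linear_combination hi2
  have hcard : 17 ≤ Fintype.card F := by rw [hF]; exact hq17
  have tveq : (⟨(t : PSL(2,F)), ht⟩ : {x : PSL(2,F) // x*x = 1 ∧ x ≠ 1})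
      = vtx h2 ι 0 0 hti := by
    apply Subtype.ext
    show (t : PSL(2,F)) = (TS ι 0 0 hti : PSL(2,F))
    rw [psl_eq_iff, coe_TS]
    left
    rw [htm]
    rfl
  rw [tveq] at hat hfix
  apply Equiv.ext
  intro v
  show a v = v
  obtain ⟨d, e, f, hd, rfl⟩ := exists_triple h2 v
  by_cases hD : d = 0
  · subst hD
    have he : e ≠ 0 := by intro hh; rw [hh] at hd; simp at hd
    have hf : f ≠ 0 := by intro hh; rw [hh] at hd; simp at hd
    obtain ⟨u, hu⟩ := exists_avoid ({0,1,-1,ι,-ι} : Finset F)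
      (lt_of_le_of_lt (card5 0 1 (-1) ι (-ι)) (by omega))
    simp only [Finset.mem_insert, Finset.mem_singleton, not_or] at hu
    obtain ⟨hu0, hu1, hu1', hui, hui'⟩ := hu
    obtain ⟨hx, hk, hs⟩ := good_m h2 hi2 hu0 hu1 hu1' hui hui'
    set x := (u - u⁻¹)/2 with hxdef
    set k := (u + u⁻¹)/2 with hkdef
    set w := k/ι with hwdef
    have hw : w ≠ 0 := div_ne_zero hk hi0
    have hww : w * ι = k := div_mul_cancel₀ _ hi0
    have hsum : x*x + w*w = -1 := by
      linear_combination hs + (w*w)*hi2 - (k + w*ι)*hww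
    have hwe : w/e*e = w := div_mul_cancel₀ _ he
    have hdet1 : x*x + (e*w)*(w/e) = -1 := by
      have hrw : (e*w)*(w/e) = w*(w/e*e) := by ring
      rw [hrw, hwe]; exact hsum
    have hdet2 : x*x + (-(e*w))*(-(w/e)) = -1 := by
      have hrw : (-(e*w))*(-(w/e)) = w*(w/e*e) := by ring
      rw [hrw, hwe]; exact hsum
    have hadj1 : (commGraph (PSL(2,F))).Adj (vtx h2 0 e f hd) (vtx h2 x (e*w) (w/e) hdet1) := by
      rw [adj_vtx]
      linear_combination hwe + w*hd
    have hadj2 : (commGraph (PSL(2,F))).Adj (vtx h2 0 e f hd)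
        (vtx h2 x (-(e*w)) (-(w/e)) hdet2) := by
      rw [adj_vtx]
      linear_combination -hwe - w*hd
    have hz1 : w/e ≠ 0 := div_ne_zero hw he
    have hdist1 : (commGraph (PSL(2,F))).dist (vtx h2 ι 0 0 hti) (vtx h2 x (e*w) (w/e) hdet1) = 2 := by
      apply dist_two h2 hti hi0 hdet1 hx hz1 he
      linear_combination (-e)*hwe
    have hdist2 : (commGraph (PSL(2,F))).dist (vtx h2 ι 0 0 hti)
        (vtx h2 x (-(e*w)) (-(w/e)) hdet2) = 2 := by
      apply dist_two h2 hti hi0 hdet2 hx (neg_ne_zero.mpr hz1) he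
      linear_combination e*hwe
    have hwne : vtx h2 x (e*w) (w/e) hdet1 ≠ vtx h2 x (-(e*w)) (-(w/e)) hdet2 := by
      rw [Ne, vtx_eq_iff]
      rintro (⟨-,e2,-⟩|⟨e1,-,-⟩)
      · have h0 : (2:F)*(e*w) = 0 := by linear_combination e2
        rcases mul_eq_zero.mp h0 with h|h
        · exact h2 h
        · rcases mul_eq_zero.mp h with h'|h'
          exacts [he h', hw h']
      · have h0 : (2:F)*x = 0 := by linear_combination e1
        rcases mul_eq_zero.mp h0 with h|h
        exacts [h2 h, hx h]
    exact fix2 h2 a ha hwne hadj1 hadj2 (hfix _ hdist1) (hfix _ hdist2)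
  · by_cases hE : e = 0
    · by_cases hG : f = 0
      · subst hE; subst hG
        have hdd : d*d = ι*ι := by linear_combination hd - hi2
        rcases sq_cases hdd with h|h
        · have hvt : vtx h2 d 0 0 hd = vtx h2 ι 0 0 hti := by
            rw [vtx_eq_iff]; exact Or.inl ⟨h, rfl, rfl⟩
          rw [hvt]; exact hat
        · have hvt : vtx h2 d 0 0 hd = vtx h2 ι 0 0 hti := by
            rw [vtx_eq_iff]; exact Or.inr ⟨h, neg_zero.symm, neg_zero.symm⟩
          rw [hvt]; exact hat
      · subst hE
        have hdd : d*d = ι*ι := by linear_combination hd - hi2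
        rcases sq_cases hdd with h|h
        · subst h
          exact fix_w hcard h2 hi2 hi0 hti a ha hfix hG hd
        · subst h
          have hW' : ι*ι + 0*(-f) = -1 := by linear_combination hi2
          have hvt : vtx h2 (-ι) 0 f hd = vtx h2 ι 0 (-f) hW' := by
            rw [vtx_eq_iff]; exact Or.inr ⟨rfl, neg_zero.symm, (neg_neg f).symm⟩
          rw [hvt]
          exact fix_w hcard h2 hi2 hi0 hti a ha hfix (neg_ne_zero.mpr hG) hW'
    · by_cases hG : f = 0
      · subst hG
        have hdd : d*d = ι*ι := by linear_combination hd - hi2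
        rcases sq_cases hdd with h|h
        · subst h
          exact fix_u hcard h2 hi2 hi0 hti a ha hfix hE hd
        · subst h
          have hU' : ι*ι + (-e)*0 = -1 := by linear_combination hi2
          have hvt : vtx h2 (-ι) e 0 hd = vtx h2 ι (-e) 0 hU' := by
            rw [vtx_eq_iff]; exact Or.inr ⟨rfl, (neg_neg e).symm, neg_zero.symm⟩
          rw [hvt]
          exact fix_u hcard h2 hi2 hi0 hti a ha hfix (neg_ne_zero.mpr hE) hU'
      · have hnum : -(2*ι*d) ≠ 0 := by
          simp only [neg_ne_zero]
          exact mul_ne_zero (mul_ne_zero h2 hi0) hD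
        set α := -(2*ι*d)/f with hαdef
        set γ := -(2*ι*d)/e with hγdef
        have hα : α ≠ 0 := div_ne_zero hnum hG
        have hγ : γ ≠ 0 := div_ne_zero hnum hE
        have hU : ι*ι + α*0 = -1 := by linear_combination hi2
        have hW : ι*ι + 0*γ = -1 := by linear_combination hi2
        have hαf : α * f = -(2*ι*d) := div_mul_cancel₀ _ hG
        have hγe : γ * e = -(2*ι*d) := div_mul_cancel₀ _ hE
        have fixU := fix_u hcard h2 hi2 hi0 hti a ha hfix hα hU
        have fixW := fix_w hcard h2 hi2 hi0 hti a ha hfix hγ hW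
        have hUW : vtx h2 ι α 0 hU ≠ vtx h2 ι 0 γ hW := by
          rw [Ne, vtx_eq_iff]
          rintro (⟨-,e2,-⟩|⟨e1,-,-⟩)
          · exact hα e2
          · have h0 : (2:F)*ι = 0 := by linear_combination e1
            rcases mul_eq_zero.mp h0 with h|h
            exacts [h2 h, hi0 h]
        have hadjU : (commGraph (PSL(2,F))).Adj (vtx h2 d e f hd) (vtx h2 ι α 0 hU) := by
          rw [adj_vtx]
          linear_combination hαf
        have hadjW : (commGraph (PSL(2,F))).Adj (vtx h2 d e f hd) (vtx h2 ι 0 γ hW) := by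
          rw [adj_vtx]
          linear_combination hγe
        exact fix2 h2 a ha hUW hadjU hadjW fixU fixW
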